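/- Let q₁,...,q_j be positive integers each at most Q with L = lcm(q₁,...,q_j). Then for every ε > 0, ∑_{n=1}^{L} ∏_{i=1}^{j} gcd(q_i, n) ≤ C(ε, j) · Q^{j + ε}. -/

import Mathlib

open Finset

private lemma lcm_ne_zero' {ι : Type*} (s : Finset ι) (f : ι → ℕ) (h : ∀ i ∈ s, f i ≠ 0) :
    s.lcm f ≠ 0 := by
  classical
  induction s using Finset.induction with
  | empty => simp
  | insert _ _ hx ih =>
    rw [Finset.lcm_insert]
    exact Nat.lcm_ne_zero (h _ (Finset.mem_insert_self _ _))
      (ih fun i hi => h i (Finset.mem_insert_of_mem hi))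

/-- Divisor bound: τ(n) ≤ C · n^δ. -/
private lemma tau_bound (δ : ℝ) (hδ : 0 < δ) :
    ∃ C : ℝ, 1 ≤ C ∧ ∀ n : ℕ, 1 ≤ n → ((n.divisors.card : ℝ)) ≤ C * (n : ℝ) ^ δ := by
  set c : ℝ := δ * Real.log 2 with hc
  have hc0 : 0 < c := mul_pos hδ (Real.log_pos one_lt_two)
  set B : ℝ := 1 + 1 / c with hB
  have hB1 : (1:ℝ) ≤ B := le_add_of_nonneg_right (by positivity)
  set P : ℕ := ⌈(2:ℝ) ^ (1/δ)⌉₊ with hP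
  refine ⟨B ^ P, one_le_pow₀ hB1, ?_⟩
  intro n hn
  have hn0 : n ≠ 0 := by omega
  -- key per-prime inequality
  have key : ∀ p ∈ n.primeFactors,
      ((n.factorization p : ℝ) + 1) ≤
        (if p < P then B else 1) * ((p:ℝ) ^ (n.factorization p)) ^ δ := by
    intro p hp
    have hp2 : 2 ≤ p := (Nat.prime_of_mem_primeFactors hp).two_le
    set a : ℕ := n.factorization p
    have hp0 : (0:ℝ) < (p:ℝ) := by positivity
    have hswap : ((p:ℝ) ^ a) ^ δ = ((p:ℝ) ^ δ) ^ a := by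
      rw [← Real.rpow_natCast (p:ℝ) a, ← Real.rpow_mul hp0.le, mul_comm,
        Real.rpow_mul hp0.le, Real.rpow_natCast]
    by_cases h : p < P
    · rw [if_pos h]
      have ha0 : (0:ℝ) ≤ (a:ℝ) := Nat.cast_nonneg a
      have h2a : ((2:ℝ) ^ a) ^ δ ≤ ((p:ℝ) ^ a) ^ δ :=
        Real.rpow_le_rpow (by positivity)
          (pow_le_pow_left₀ (by norm_num) (by exact_mod_cast hp2) a) hδ.le
      have hexp : ((2:ℝ) ^ a) ^ δ = Real.exp ((a:ℝ) * c) := by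
        rw [← Real.rpow_natCast (2:ℝ) a, ← Real.rpow_mul (by norm_num),
          Real.rpow_def_of_pos (by norm_num)]
        congr 1
        rw [hc]; ring
      have h3 : 1 + (a:ℝ) * c ≤ ((2:ℝ) ^ a) ^ δ := by
        rw [hexp]; linarith [Real.add_one_le_exp ((a:ℝ) * c)]
      have hinv : (1/c) * c = 1 := by field_simp
      have hstep : (a:ℝ) + 1 ≤ B * (1 + (a:ℝ) * c) := by
        rw [hB]
        nlinarith [mul_nonneg ha0 hc0.le, hc0, ha0]
      calc (a:ℝ) + 1 ≤ B * (1 + (a:ℝ) * c) := hstep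
        _ ≤ B * (((2:ℝ) ^ a) ^ δ) := by
            refine mul_le_mul_of_nonneg_left h3 (by linarith)
        _ ≤ B * (((p:ℝ) ^ a) ^ δ) := mul_le_mul_of_nonneg_left h2a (by linarith)
    · rw [if_neg h, one_mul, hswap]
      have h2p : (2:ℝ) ≤ (p:ℝ) ^ δ := by
        have h1 : (2:ℝ) ^ (1/δ) ≤ (p:ℝ) := by
          refine le_trans (Nat.le_ceil _) ?_
          exact_mod_cast Nat.cast_le.mpr (not_lt.mp h)
        calc (2:ℝ) = ((2:ℝ) ^ (1/δ)) ^ δ := by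
              rw [← Real.rpow_mul (by norm_num), one_div, inv_mul_cancel₀ hδ.ne',
                Real.rpow_one]
          _ ≤ (p:ℝ) ^ δ := Real.rpow_le_rpow (by positivity) h1 hδ.le
      calc ((a:ℝ) + 1) ≤ (2:ℝ) ^ a := by
            exact_mod_cast (Nat.lt_two_pow_self (n := a))
        _ ≤ ((p:ℝ) ^ δ) ^ a := pow_le_pow_left₀ (by norm_num) h2p a
  calc ((n.divisors.card : ℝ))
      = ∏ p ∈ n.primeFactors, ((n.factorization p : ℝ) + 1) := by
        rw [Nat.card_divisors hn0]; push_cast; rfl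
    _ ≤ ∏ p ∈ n.primeFactors,
          (if p < P then B else 1) * ((p:ℝ) ^ (n.factorization p)) ^ δ := by
        refine Finset.prod_le_prod (fun p _ => by positivity) key
    _ = (∏ p ∈ n.primeFactors, if p < P then B else 1) *
          ∏ p ∈ n.primeFactors, ((p:ℝ) ^ (n.factorization p)) ^ δ :=
        Finset.prod_mul_distrib
    _ ≤ B ^ P * (n:ℝ) ^ δ := by
        have h1 : (∏ p ∈ n.primeFactors, if p < P then B else 1) ≤ B ^ P := by
          rw [← Finset.prod_filter, Finset.prod_const]
          refine pow_le_pow_right₀ hB1 ?_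
          calc (n.primeFactors.filter (· < P)).card ≤ (Finset.range P).card :=
                Finset.card_le_card (fun x hx => by
                  simp only [Finset.mem_filter] at hx
                  exact Finset.mem_range.mpr hx.2)
            _ = P := Finset.card_range P
        have h2 : ∏ p ∈ n.primeFactors, ((p:ℝ) ^ (n.factorization p)) ^ δ = (n:ℝ) ^ δ := by
          rw [Real.finset_prod_rpow _ _ (fun i _ => by positivity) δ]
          congr 1
          have := Nat.factorization_prod_pow_eq_self hn0
          rw [Finsupp.prod] at this
          rw [Nat.support_factorization] at this
          exact_mod_cast congrArg (Nat.cast (R := ℝ)) this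
        rw [h2]
        refine mul_le_mul_of_nonneg_right h1 (by positivity)

private lemma gcd_eq_sum_totient (q n : ℕ) (hq : q ≠ 0) :
    Nat.gcd q n = ∑ e ∈ q.divisors, if e ∣ n then e.totient else 0 := by
  rw [← Finset.sum_filter]
  have h : q.divisors.filter (· ∣ n) = (Nat.gcd q n).divisors := by
    ext e
    simp only [Finset.mem_filter, Nat.mem_divisors, Nat.dvd_gcd_iff]
    constructor
    · rintro ⟨⟨h1, -⟩, h2⟩
      exact ⟨⟨h1, h2⟩, fun h0 => hq (Nat.eq_zero_of_gcd_eq_zero_left h0)⟩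
    · rintro ⟨⟨h1, h2⟩, -⟩
      exact ⟨⟨h1, hq⟩, h2⟩
  rw [h, Nat.sum_totient]

private lemma main_nat (j : ℕ) (q : Fin j → ℕ) (hq : ∀ i, 1 ≤ q i) :
    ∑ n ∈ Finset.Icc 1 (Finset.univ.lcm q), ∏ i, Nat.gcd (q i) n ≤
      (∏ i, (q i).divisors.card) * ∏ i, q i := by
  classical
  set L := Finset.univ.lcm q with hLdef
  have hq0 : ∀ i, q i ≠ 0 := fun i => Nat.one_le_iff_ne_zero.mp (hq i)
  have hL0 : L ≠ 0 := lcm_ne_zero' _ _ fun i _ => hq0 i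
  have step1 : ∀ n, ∏ i, Nat.gcd (q i) n =
      ∑ d ∈ Fintype.piFinset (fun i => (q i).divisors),
        ∏ i, if d i ∣ n then (d i).totient else 0 := by
    intro n
    calc ∏ i, Nat.gcd (q i) n
        = ∏ i, ∑ e ∈ (q i).divisors, (if e ∣ n then e.totient else 0) :=
          Finset.prod_congr rfl fun i _ => gcd_eq_sum_totient (q i) n (hq0 i)
      _ = ∑ d ∈ Fintype.piFinset (fun i => (q i).divisors),
            ∏ i, if d i ∣ n then (d i).totient else 0 :=
          Finset.prod_univ_sum _ _
  calc ∑ n ∈ Finset.Icc 1 L, ∏ i, Nat.gcd (q i) n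
      = ∑ d ∈ Fintype.piFinset (fun i => (q i).divisors),
          ∑ n ∈ Finset.Icc 1 L, ∏ i, if d i ∣ n then (d i).totient else 0 := by
        rw [← Finset.sum_comm]
        exact Finset.sum_congr rfl fun n _ => step1 n
    _ ≤ ∑ _d ∈ Fintype.piFinset (fun i => (q i).divisors), ∏ i, q i := by
        refine Finset.sum_le_sum fun d hd => ?_
        have hmem : ∀ i, d i ∈ (q i).divisors := by
          rw [Fintype.mem_piFinset] at hd; exact hd
        have hdvd : ∀ i, d i ∣ q i := fun i => (Nat.mem_divisors.mp (hmem i)).1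
        have hd0 : ∀ i, d i ≠ 0 := fun i => (Nat.pos_of_mem_divisors (hmem i)).ne'
        set D := Finset.univ.lcm d with hDdef
        have hD0 : D ≠ 0 := lcm_ne_zero' _ _ fun i _ => hd0 i
        have hDL : D ∣ L :=
          Finset.lcm_dvd fun i _ => (hdvd i).trans (Finset.dvd_lcm (Finset.mem_univ i))
        have hprod : ∀ n, (∏ i, if d i ∣ n then (d i).totient else 0) =
            if D ∣ n then ∏ i, (d i).totient else 0 := by
          intro n
          by_cases h : D ∣ n
          · rw [if_pos h]
            exact Finset.prod_congr rfl fun i _ =>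
              if_pos ((Finset.dvd_lcm (Finset.mem_univ i)).trans h)
          · rw [if_neg h]
            obtain ⟨i, hi⟩ : ∃ i, ¬ d i ∣ n := by
              by_contra hall
              push_neg at hall
              exact h (Finset.lcm_dvd fun i _ => hall i)
            exact Finset.prod_eq_zero (Finset.mem_univ i) (if_neg hi)
        have hcount : ∑ n ∈ Finset.Icc 1 L, ∏ i, (if d i ∣ n then (d i).totient else 0) =
            (∏ i, (d i).totient) * (L / D) := by
          simp only [hprod]
          rw [← Finset.sum_filter, Finset.sum_const, smul_eq_mul, mul_comm]
          congr 1
          have : Finset.Icc 1 L = Finset.Ioc 0 L := rfl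
          rw [this]
          exact Nat.Ioc_filter_dvd_card_eq_div L D
        rw [hcount]
        -- key divisibility
        have hkey : (∏ i, d i) * L ∣ (∏ i, q i) * D := by
          have h1 : L ∣ D * ∏ i, (q i / d i) := by
            refine Finset.lcm_dvd fun i _ => ?_
            calc q i = d i * (q i / d i) := (Nat.mul_div_cancel' (hdvd i)).symm
              _ ∣ D * ∏ i, (q i / d i) :=
                mul_dvd_mul (Finset.dvd_lcm (Finset.mem_univ i))
                  (Finset.dvd_prod_of_mem _ (Finset.mem_univ i))
          calc (∏ i, d i) * L ∣ (∏ i, d i) * (D * ∏ i, (q i / d i)) :=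
                mul_dvd_mul_left _ h1
            _ = (∏ i, d i * (q i / d i)) * D := by
                rw [Finset.prod_mul_distrib]; ring
            _ = (∏ i, q i) * D := by
                congr 1
                exact Finset.prod_congr rfl fun i _ => Nat.mul_div_cancel' (hdvd i)
        have hQD0 : 0 < (∏ i, q i) * D :=
          Nat.mul_pos (Finset.prod_pos fun i _ => hq i) (Nat.pos_of_ne_zero hD0)
        calc (∏ i, (d i).totient) * (L / D) ≤ (∏ i, d i) * (L / D) :=
              Nat.mul_le_mul_right _ (Finset.prod_le_prod' fun i _ => Nat.totient_le _)
          _ = ((∏ i, d i) * L) / D := (Nat.mul_div_assoc _ hDL).symm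
          _ ≤ ((∏ i, q i) * D) / D := Nat.div_le_div_right (Nat.le_of_dvd hQD0 hkey)
          _ = ∏ i, q i := by
              rw [Nat.mul_div_assoc _ dvd_rfl, Nat.div_self (Nat.pos_of_ne_zero hD0), mul_one]
    _ = (∏ i, (q i).divisors.card) * ∏ i, q i := by
        rw [Finset.sum_const, smul_eq_mul, Fintype.card_piFinset]

theorem stmt_11 (ε : ℝ) (hε : 0 < ε) (j : ℕ) (hj : 1 ≤ j) :
    ∃ C : ℝ, 0 < C ∧ ∀ (Q : ℕ) (q : Fin j → ℕ), 1 ≤ Q →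
      (∀ i, 1 ≤ q i) → (∀ i, q i ≤ Q) →
      (∑ n ∈ Finset.Icc 1 (Finset.univ.lcm q), ∏ i, (Nat.gcd (q i) n : ℝ)) ≤
        C * (Q : ℝ) ^ ((j : ℝ) + ε) := by
  have hj0 : (j : ℝ) ≠ 0 := by positivity
  obtain ⟨C₀, hC₀1, hC₀⟩ := tau_bound (ε / j) (by positivity)
  have hC₀0 : 0 < C₀ := lt_of_lt_of_le one_pos hC₀1
  refine ⟨C₀ ^ j, by positivity, ?_⟩
  intro Q q hQ hq hqQ
  have hQ0 : (0:ℝ) < (Q:ℝ) := by exact_mod_cast hQ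
  have hcast : (∑ n ∈ Finset.Icc 1 (Finset.univ.lcm q), ∏ i, (Nat.gcd (q i) n : ℝ)) =
      ((∑ n ∈ Finset.Icc 1 (Finset.univ.lcm q), ∏ i, Nat.gcd (q i) n : ℕ) : ℝ) := by
    push_cast; rfl
  rw [hcast]
  calc ((∑ n ∈ Finset.Icc 1 (Finset.univ.lcm q), ∏ i, Nat.gcd (q i) n : ℕ) : ℝ)
      ≤ (((∏ i, (q i).divisors.card) * ∏ i, q i : ℕ) : ℝ) := by
        exact_mod_cast main_nat j q hq
    _ = (∏ i, ((q i).divisors.card : ℝ)) * ∏ i, ((q i : ℝ)) := by push_cast; rfl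
    _ ≤ (∏ _i : Fin j, C₀ * (Q:ℝ) ^ (ε / j)) * ∏ _i : Fin j, (Q:ℝ) := by
        refine mul_le_mul ?_ ?_ ?_ ?_
        · refine Finset.prod_le_prod (fun i _ => by positivity) fun i _ => ?_
          calc ((q i).divisors.card : ℝ) ≤ C₀ * ((q i : ℝ)) ^ (ε / j) := hC₀ (q i) (hq i)
            _ ≤ C₀ * (Q:ℝ) ^ (ε / j) := by
                refine mul_le_mul_of_nonneg_left ?_ hC₀0.le
                exact Real.rpow_le_rpow (by positivity) (by exact_mod_cast hqQ i)
                  (by positivity)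
        · exact Finset.prod_le_prod (fun i _ => by positivity)
            fun i _ => by exact_mod_cast hqQ i
        · exact Finset.prod_nonneg fun i _ => by positivity
        · exact Finset.prod_nonneg fun i _ => by positivity
    _ = C₀ ^ j * (Q : ℝ) ^ ((j : ℝ) + ε) := by
        rw [Finset.prod_const, Finset.prod_const, Finset.card_univ, Fintype.card_fin,
          mul_pow, ← Real.rpow_natCast ((Q:ℝ) ^ (ε / j)) j, ← Real.rpow_mul hQ0.le,
          div_mul_cancel₀ _ hj0, ← Real.rpow_natCast (Q:ℝ) j, mul_assoc,
          ← Real.rpow_add hQ0, add_comm ε (j:ℝ)]
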